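/- For every natural number m and real x, y, t such that 1 + x t + y t² > 0, the m-th derivative with respect to t of 1/(1 + x t + y t²) equals m! · U_m( (x + 2 y t)/(1 + x t + y t²), y/(1 + x t + y t²) ) / (1 + x t + y t²), where U_m is the two-variable Chebyshev polynomial of the second kind. -/

import Mathlib

open Real Finset

noncomputable def cheb2 (n : ℕ) (x y : ℝ) : ℝ :=
  (-1 : ℝ) ^ n *
    ∑ r ∈ Finset.range (n / 2 + 1),
      (Nat.factorial (n - r) : ℝ) * x ^ (n - 2 * r) * (-y) ^ r /
        ((Nat.factorial (n - 2 * r) : ℝ) * (Nat.factorial r : ℝ))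


noncomputable def cc (m r : ℕ) : ℝ :=
  if 2*r ≤ m then (-1:ℝ)^(m+r) * (Nat.factorial m) * (Nat.factorial (m-r)) /
    ((Nat.factorial (m-2*r)) * (Nat.factorial r)) else 0

noncomputable def G (x y : ℝ) (m : ℕ) (t : ℝ) : ℝ :=
  ∑ r ∈ Finset.range (m+1),
    cc m r * (x+2*y*t)^(m-2*r) * y^r / (1+x*t+y*t^2)^(m-r+1)

lemma hP' (x y t : ℝ) : HasDerivAt (fun s : ℝ => x + 2*y*s) (2*y) t := by
  simpa using ((hasDerivAt_id t).const_mul (2*y)).const_add x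

lemma hQ' (x y t : ℝ) : HasDerivAt (fun s : ℝ => 1 + x*s + y*s^2) (x + 2*y*t) t := by
  have h := (((hasDerivAt_id t).const_mul x).const_add 1).fun_add ((hasDerivAt_pow 2 t).const_mul y)
  simp only [id] at h
  refine h.congr_deriv ?_
  ring

lemma term_hasDeriv (m r : ℕ) (x y t : ℝ) (hQ : (1 + x*t + y*t^2) ≠ 0) :
    HasDerivAt (fun s => cc m r * (x + 2*y*s)^(m-2*r) * y^r / (1 + x*s + y*s^2)^(m-r+1))
      (2*((m-2*r:ℕ):ℝ) * cc m r * (x+2*y*t)^(m-2*r-1) * y^(r+1) / (1+x*t+y*t^2)^(m-r+1)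
        - (((m-r:ℕ):ℝ)+1) * cc m r * (x+2*y*t)^(m-2*r+1) * y^r / (1+x*t+y*t^2)^(m-r+2)) t := by
  have hnum : HasDerivAt (fun s => cc m r * (x+2*y*s)^(m-2*r) * y^r)
      (cc m r * (((m-2*r:ℕ):ℝ) * (x+2*y*t)^(m-2*r-1) * (2*y)) * y^r) t :=
    (((hP' x y t).pow _).const_mul _).mul_const _
  have hden : HasDerivAt (fun s : ℝ => (1+x*s+y*s^2)^(m-r+1))
      ((((m-r+1:ℕ)):ℝ) * (1+x*t+y*t^2)^(m-r) * (x+2*y*t)) t := by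
    simpa using (hQ' x y t).fun_pow (m-r+1)
  have h := hnum.fun_div hden (pow_ne_zero _ hQ)
  refine h.congr_deriv ?_
  rcases Nat.eq_zero_or_pos (m - 2*r) with h0 | hpos
  · rw [h0]
    push_cast
    field_simp
    ring
  · obtain ⟨k, hk⟩ : ∃ k, m - 2*r = k + 1 := ⟨m - 2*r - 1, by omega⟩
    rw [show m - 2*r - 1 = k from by omega, hk]
    push_cast
    field_simp
    ring
lemma cc_zero (m : ℕ) : cc m 0 = (-1:ℝ)^m * (Nat.factorial m) := by
  simp [cc, Nat.factorial_ne_zero]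

lemma cc_neg (m r : ℕ) (h : ¬ 2*r ≤ m) : cc m r = 0 := by simp [cc, h]

-- coefficient recurrence, case 2(r+1) ≤ m
lemma cc_recA (m r : ℕ) (h : 2*(r+1) ≤ m) :
    cc (m+1) (r+1) = 2*((m-2*r:ℕ):ℝ) * cc m r - (((m-(r+1):ℕ):ℝ)+1) * cc m (r+1) := by
  obtain ⟨k, hk⟩ : ∃ k, m = 2*r+2+k := ⟨m - (2*r+2), by omega⟩
  subst hk
  rw [cc, cc, cc, if_pos (by omega), if_pos (by omega), if_pos (by omega)]
  rw [show 2*r+2+k+1 - (r+1) = r+k+2 from by omega,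
      show 2*r+2+k+1 - 2*(r+1) = k+1 from by omega,
      show 2*r+2+k - r = r+k+2 from by omega,
      show 2*r+2+k - 2*r = k+2 from by omega,
      show 2*r+2+k - (r+1) = r+k+1 from by omega,
      show 2*r+2+k - 2*(r+1) = k from by omega,
      show 2*r+2+k+1+(r+1) = (2*r+2+k+r) + 2 from by omega,
      show 2*r+2+k+(r+1) = (2*r+2+k+r) + 1 from by omega]
  have f1 : ((2*r+2+k+1).factorial : ℝ) = (2*r+2+k+1) * (2*r+2+k).factorial := by
    rw [Nat.factorial_succ]; push_cast; ring
  have f2 : ((r+k+2).factorial : ℝ) = (r+k+2) * (r+k+1).factorial := by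
    rw [show r+k+2 = (r+k+1)+1 from rfl, Nat.factorial_succ]; push_cast; ring
  have f3 : ((k+2).factorial : ℝ) = (k+2) * ((k+1) * k.factorial) := by
    rw [show k+2 = (k+1)+1 from rfl, Nat.factorial_succ, Nat.factorial_succ]; push_cast; ring
  have f4 : ((k+1).factorial : ℝ) = (k+1) * k.factorial := by
    rw [Nat.factorial_succ]; push_cast; ring
  have f5 : ((r+1).factorial : ℝ) = (r+1) * r.factorial := by
    rw [Nat.factorial_succ]; push_cast; ring
  rw [pow_add, pow_add, pow_add, f1, f2, f3, f4, f5]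
  have hk0 : (k.factorial : ℝ) ≠ 0 := Nat.cast_ne_zero.2 (Nat.factorial_ne_zero k)
  have hr0 : (r.factorial : ℝ) ≠ 0 := Nat.cast_ne_zero.2 (Nat.factorial_ne_zero r)
  push_cast
  field_simp
  ring

-- case 2(r+1) = m+1
lemma cc_recB (m r : ℕ) (h : 2*(r+1) = m+1) :
    cc (m+1) (r+1) = 2*((m-2*r:ℕ):ℝ) * cc m r - (((m-(r+1):ℕ):ℝ)+1) * cc m (r+1) := by
  have hm : m = 2*r+1 := by omega
  subst hm
  rw [cc_neg (2*r+1) (r+1) (by omega), cc, cc, if_pos (by omega), if_pos (by omega)]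
  rw [show 2*r+1+1 - (r+1) = r+1 from by omega,
      show 2*r+1+1 - 2*(r+1) = 0 from by omega,
      show 2*r+1 - r = r+1 from by omega,
      show 2*r+1 - 2*r = 1 from by omega,
      show 2*r+1+1+(r+1) = (2*r+1+r) + 2 from by omega,
      show 2*r+1+r = (2*r+1+r) from rfl]
  have f1 : ((2*r+1+1).factorial : ℝ) = (2*r+1+1) * (2*r+1).factorial := by
    rw [Nat.factorial_succ]; push_cast; ring
  have f5 : ((r+1).factorial : ℝ) = (r+1) * r.factorial := by
    rw [Nat.factorial_succ]; push_cast; ring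
  rw [pow_add, f1, f5]
  have hr0 : (r.factorial : ℝ) ≠ 0 := Nat.cast_ne_zero.2 (Nat.factorial_ne_zero r)
  simp [Nat.factorial]
  field_simp
  ring

-- case 2r ≥ m
lemma cc_recC (m r : ℕ) (h1 : m ≤ 2*r) (h2 : r < m) :
    cc (m+1) (r+1) = 2*((m-2*r:ℕ):ℝ) * cc m r - (((m-(r+1):ℕ):ℝ)+1) * cc m (r+1) := by
  rw [show m - 2*r = 0 from by omega, cc_neg (m+1) (r+1) (by omega), cc_neg m (r+1) (by omega)]
  simp

lemma key (m r : ℕ) (hr : r < m) (P Q y : ℝ) :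
    cc (m+1) (r+1) * P^(m+1-2*(r+1)) * y^(r+1) / Q^(m+1-(r+1)+1)
    = (2*((m-2*r:ℕ):ℝ) * cc m r * P^(m-2*r-1) * y^(r+1) / Q^(m-r+1))
      - ((((m-(r+1):ℕ):ℝ)+1) * cc m (r+1) * P^(m-2*(r+1)+1) * y^(r+1) / Q^(m-(r+1)+2)) := by
  rw [show m+1-(r+1)+1 = m-r+1 from by omega, show m-(r+1)+2 = m-r+1 from by omega]
  rcases lt_trichotomy (2*(r+1)) (m+1) with hc | hc | hc
  · rw [show m+1-2*(r+1) = m-2*r-1 from by omega, show m-2*(r+1)+1 = m-2*r-1 from by omega,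
        cc_recA m r (by omega)]
    ring
  · rw [show m+1-2*(r+1) = 0 from by omega, show m-2*r-1 = 0 from by omega,
        cc_recB m r (by omega), cc_neg m (r+1) (by omega)]
    ring
  · rw [show m - 2*r = 0 from by omega, cc_neg (m+1) (r+1) (by omega),
        cc_neg m (r+1) (by omega)]
    simp

lemma sum_identity (m : ℕ) (P Q y : ℝ) :
    ∑ r ∈ Finset.range (m+1+1), cc (m+1) r * P^(m+1-2*r) * y^r / Q^(m+1-r+1)
    = ∑ r ∈ Finset.range (m+1),
        (2*((m-2*r:ℕ):ℝ) * cc m r * P^(m-2*r-1) * y^(r+1) / Q^(m-r+1)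
          - (((m-r:ℕ):ℝ)+1) * cc m r * P^(m-2*r+1) * y^r / Q^(m-r+2)) := by
  rw [Finset.sum_sub_distrib, Finset.sum_range_succ' _ (m+1), Finset.sum_range_succ
    (fun r => cc (m+1) (r+1) * P^(m+1-2*(r+1)) * y^(r+1) / Q^(m+1-(r+1)+1)) m,
    Finset.sum_range_succ (fun r => 2*((m-2*r:ℕ):ℝ) * cc m r * P^(m-2*r-1) * y^(r+1) / Q^(m-r+1)) m,
    Finset.sum_range_succ' (fun r => (((m-r:ℕ):ℝ)+1) * cc m r * P^(m-2*r+1) * y^r / Q^(m-r+2)) m]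
  have h1 : cc (m+1) (m+1) = 0 := cc_neg _ _ (by omega)
  have h2 : ((m - 2*m : ℕ) : ℝ) = 0 := by rw [show m - 2*m = 0 from by omega]; simp
  have h3 : ∑ r ∈ Finset.range m, cc (m+1) (r+1) * P^(m+1-2*(r+1)) * y^(r+1) / Q^(m+1-(r+1)+1)
      = ∑ r ∈ Finset.range m,
        (2*((m-2*r:ℕ):ℝ) * cc m r * P^(m-2*r-1) * y^(r+1) / Q^(m-r+1)
          - (((m-(r+1):ℕ):ℝ)+1) * cc m (r+1) * P^(m-2*(r+1)+1) * y^(r+1) / Q^(m-(r+1)+2)) :=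
    Finset.sum_congr rfl (fun r hr => key m r (Finset.mem_range.1 hr) P Q y)
  rw [Finset.sum_sub_distrib] at h3
  rw [h1, h2, h3, cc_zero, cc_zero]
  rw [show m-0+1 = m+1 from by omega, show m-0+2 = m+1+1 from by omega, show ((m-0:ℕ):ℝ) = (m:ℝ) from by norm_num]
  rw [pow_succ (-1:ℝ) m, Nat.factorial_succ]
  push_cast
  ring
lemma G_hasDeriv (m : ℕ) (x y t : ℝ) (hQ : (1 + x*t + y*t^2) ≠ 0) :
    HasDerivAt (fun s => G x y m s) (G x y (m+1) t) t := by
  have h := HasDerivAt.fun_sum (fun r (_ : r ∈ Finset.range (m+1)) => term_hasDeriv m r x y t hQ)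
  have e : G x y (m+1) t = ∑ r ∈ Finset.range (m+1),
      (2*((m-2*r:ℕ):ℝ) * cc m r * (x+2*y*t)^(m-2*r-1) * y^(r+1) / (1+x*t+y*t^2)^(m-r+1)
        - (((m-r:ℕ):ℝ)+1) * cc m r * (x+2*y*t)^(m-2*r+1) * y^r / (1+x*t+y*t^2)^(m-r+2)) := by
    rw [G]
    exact sum_identity m (x+2*y*t) (1+x*t+y*t^2) y
  rw [e]
  exact h

lemma iter_eq_G (m : ℕ) (x y : ℝ) : ∀ t : ℝ, 0 < 1 + x*t + y*t^2 →
    iteratedDeriv m (fun s : ℝ => 1 / (1 + x * s + y * s ^ 2)) t = G x y m t := by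
  induction m with
  | zero =>
    intro t ht
    simp [G, cc, iteratedDeriv_zero]
  | succ m ih =>
    intro t ht
    rw [iteratedDeriv_succ]
    have hc : ContinuousAt (fun s : ℝ => 1 + x*s + y*s^2) t := by fun_prop
    have hpos : ∀ᶠ s in nhds t, 0 < 1 + x*s + y*s^2 := hc.eventually (eventually_gt_nhds ht)
    have hev : (fun s => iteratedDeriv m (fun u : ℝ => 1/(1+x*u+y*u^2)) s)
        =ᶠ[nhds t] fun s => G x y m s := by
      filter_upwards [hpos] with s hs using ih s hs
    rw [Filter.EventuallyEq.deriv_eq hev]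
    exact (G_hasDeriv m x y t (ne_of_gt ht)).deriv

lemma G_eq_cheb2 (m : ℕ) (x y t : ℝ) (h : 0 < 1 + x*t + y*t^2) :
    G x y m t = (Nat.factorial m : ℝ) *
      cheb2 m ((x + 2*y*t)/(1 + x*t + y*t^2)) (y/(1 + x*t + y*t^2)) / (1 + x*t + y*t^2) := by
  have hQ : (1 + x*t + y*t^2) ≠ 0 := ne_of_gt h
  rw [cheb2, G, Finset.mul_sum, Finset.mul_sum, Finset.sum_div]
  rw [← Finset.sum_subset (Finset.range_subset_range.2 (show m/2+1 ≤ m+1 from by omega))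
      (fun r _ hr => by
        rw [cc_neg m r (by simp only [Finset.mem_range] at hr; omega)]
        simp)]
  refine Finset.sum_congr rfl (fun r hr => ?_)
  have h2r : 2*r ≤ m := by simp only [Finset.mem_range] at hr; omega
  rw [cc, if_pos h2r, div_pow, show (-(y/(1+x*t+y*t^2))) = (-y)/(1+x*t+y*t^2) from (neg_div _ _).symm, div_pow,
      show (1+x*t+y*t^2)^(m-r+1) = (1+x*t+y*t^2)^(m-2*r) * (1+x*t+y*t^2)^r * (1+x*t+y*t^2) from by
        rw [← pow_add, ← pow_succ]; congr 1; omega]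
  have hf1 : ((m-2*r).factorial : ℝ) ≠ 0 := Nat.cast_ne_zero.2 (Nat.factorial_ne_zero _)
  have hf2 : (r.factorial : ℝ) ≠ 0 := Nat.cast_ne_zero.2 (Nat.factorial_ne_zero _)
  field_simp
  ring

theorem cheb2_rodriguez (m : ℕ) (x y t : ℝ) (h : 0 < 1 + x * t + y * t ^ 2) :
    iteratedDeriv m (fun s : ℝ => 1 / (1 + x * s + y * s ^ 2)) t =
      (Nat.factorial m : ℝ) *
        cheb2 m ((x + 2 * y * t) / (1 + x * t + y * t ^ 2))
          (y / (1 + x * t + y * t ^ 2)) /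
        (1 + x * t + y * t ^ 2) := by
  rw [iter_eq_G m x y t h, G_eq_cheb2 m x y t h]
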